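/- Cauchy-estimate for majorants: if M is holomorphic on a neighborhood of the closed disk of radius c + r about 0 with nonnegative Taylor coefficients, then M'(c) ≤ r^{−1}·M(c+r) for all c ≥ 0 and r > 0. Consequently, for an R-entire function φ on a Lie group, q_{R,c}(L_{X_ξ}φ) ≤ ‖ξ‖_∞ · q_{R,c+1}(φ). -/

import Mathlib

set_option maxHeartbeats 800000

/-- Binomial lower bound: `(k+1) x^k y ≤ (x+y)^(k+1)` for `x, y ≥ 0`. -/
lemma binom_aux (x y : ℝ) (hx : 0 ≤ x) (hy : 0 ≤ y) (k : ℕ) :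
    ((k : ℝ) + 1) * x ^ k * y ≤ (x + y) ^ (k + 1) := by
  rw [add_pow]
  have hmem : k ∈ Finset.range (k + 1 + 1) := by
    simp [Finset.mem_range]
  have := Finset.single_le_sum
    (f := fun i => x ^ i * y ^ (k + 1 - i) * (Nat.choose (k + 1) i : ℝ))
    (fun i _ => by positivity) hmem
  refine le_trans (le_of_eq ?_) this
  have h1 : k + 1 - k = 1 := by omega
  rw [h1, Nat.choose_succ_self_right]
  push_cast
  ring

/-- Shifted tsum of a nonnegative summable function is at most the full tsum. -/
lemma tsum_shift_le (f : ℕ → ℝ) (hf : ∀ k, 0 ≤ f k) (hsum : Summable f) :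
    ∑' k : ℕ, f (k + 1) ≤ ∑' k : ℕ, f k := by
  exact Summable.tsum_le_tsum_of_inj (fun k => k + 1) (fun a b h => by simpa using h)
    (fun i _ => hf i) (fun n => le_refl _)
    ((summable_nat_add_iff 1).mpr hsum) hsum

/-- Cauchy estimate for majorants: if `M(z) = Σ_k a_k z^k` has nonnegative coefficients
and converges on (a neighbourhood of) the closed disk of radius `c + r`, then
`M'(c) ≤ r⁻¹ · M(c+r)` for `c ≥ 0`, `r > 0`. Consequently, for an `R`-entire function
`φ` with coefficients `a_k = c_k(φ)` and `L_{X_ξ}φ` with coefficients `b_k` satisfying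
`b_k ≤ ‖ξ‖_∞ (k+1) a_{k+1}` (with `s = ‖ξ‖_∞`), one has
`q_{R,c}(L_{X_ξ}φ) ≤ ‖ξ‖_∞ · q_{R,c+1}(φ)` for `R ≥ 0`. -/
theorem cauchy_estimate_majorant (a : ℕ → ℝ) (ha : ∀ k, 0 ≤ a k)
    (c r : ℝ) (hc : 0 ≤ c) (hr : 0 < r)
    (hsum : Summable fun k : ℕ => a k * (c + r) ^ k) :
    (∑' k : ℕ, ((k : ℝ) + 1) * a (k + 1) * c ^ k ≤
      r⁻¹ * ∑' k : ℕ, a k * (c + r) ^ k) ∧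
    (∀ (R s : ℝ) (b : ℕ → ℝ), 0 ≤ R → 0 ≤ s → (∀ k, 0 ≤ b k) →
      (∀ k : ℕ, b k ≤ s * ((k : ℝ) + 1) * a (k + 1)) →
      (Summable fun k : ℕ => (k.factorial : ℝ) ^ R * a k * (c + 1) ^ k) →
      ∑' k : ℕ, (k.factorial : ℝ) ^ R * b k * c ^ k ≤
        s * ∑' k : ℕ, (k.factorial : ℝ) ^ R * a k * (c + 1) ^ k) := by
  constructor
  · -- Part 1
    have hs1 : Summable (fun k : ℕ => a (k + 1) * (c + r) ^ (k + 1)) :=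
      (summable_nat_add_iff 1).mpr hsum
    have key : ∀ k : ℕ, ((k : ℝ) + 1) * a (k + 1) * c ^ k ≤
        r⁻¹ * (a (k + 1) * (c + r) ^ (k + 1)) := by
      intro k
      rw [le_inv_mul_iff₀ hr]
      have h1 := binom_aux c r hc hr.le k
      have := mul_le_mul_of_nonneg_left h1 (ha (k + 1))
      nlinarith [ha (k + 1)]
    have hL : Summable (fun k : ℕ => ((k : ℝ) + 1) * a (k + 1) * c ^ k) :=
      Summable.of_nonneg_of_le
        (fun k => mul_nonneg (mul_nonneg (by positivity) (ha _)) (by positivity))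
        key (hs1.mul_left r⁻¹)
    calc ∑' k : ℕ, ((k : ℝ) + 1) * a (k + 1) * c ^ k
        ≤ ∑' k : ℕ, r⁻¹ * (a (k + 1) * (c + r) ^ (k + 1)) :=
          Summable.tsum_le_tsum key hL (hs1.mul_left r⁻¹)
      _ = r⁻¹ * ∑' k : ℕ, a (k + 1) * (c + r) ^ (k + 1) := tsum_mul_left
      _ ≤ r⁻¹ * ∑' k : ℕ, a k * (c + r) ^ k := by
          apply mul_le_mul_of_nonneg_left _ (inv_nonneg.mpr hr.le)
          exact tsum_shift_le _ (fun k => mul_nonneg (ha k) (by positivity)) hsum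
  · -- Part 2
    intro R s b hR hs hb hbs hsum2
    have hs1 : Summable (fun k : ℕ =>
        ((k + 1).factorial : ℝ) ^ R * a (k + 1) * (c + 1) ^ (k + 1)) :=
      (summable_nat_add_iff 1).mpr hsum2
    have key : ∀ k : ℕ, (k.factorial : ℝ) ^ R * b k * c ^ k ≤
        s * (((k + 1).factorial : ℝ) ^ R * a (k + 1) * (c + 1) ^ (k + 1)) := by
      intro k
      have hfac : (k.factorial : ℝ) ^ R ≤ ((k + 1).factorial : ℝ) ^ R := by
        apply Real.rpow_le_rpow (by positivity) _ hR
        exact_mod_cast Nat.factorial_le (Nat.le_succ k)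
      have hbin : ((k : ℝ) + 1) * c ^ k ≤ (c + 1) ^ (k + 1) := by
        have := binom_aux c 1 hc zero_le_one k
        simpa using this
      calc (k.factorial : ℝ) ^ R * b k * c ^ k
          ≤ (k.factorial : ℝ) ^ R * (s * ((k : ℝ) + 1) * a (k + 1)) * c ^ k := by
            have hck : (0 : ℝ) ≤ c ^ k := by positivity
            have hfk : (0 : ℝ) ≤ (k.factorial : ℝ) ^ R := by positivity
            exact mul_le_mul_of_nonneg_right
              (mul_le_mul_of_nonneg_left (hbs k) hfk) hck
        _ = s * ((k.factorial : ℝ) ^ R * (((k : ℝ) + 1) * c ^ k) * a (k + 1)) := by ring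
        _ ≤ s * (((k + 1).factorial : ℝ) ^ R * (c + 1) ^ (k + 1) * a (k + 1)) := by
            apply mul_le_mul_of_nonneg_left _ hs
            apply mul_le_mul_of_nonneg_right _ (ha (k + 1))
            apply mul_le_mul hfac hbin (by positivity) (by positivity)
        _ = s * (((k + 1).factorial : ℝ) ^ R * a (k + 1) * (c + 1) ^ (k + 1)) := by ring
    have hL : Summable (fun k : ℕ => (k.factorial : ℝ) ^ R * b k * c ^ k) :=
      Summable.of_nonneg_of_le
        (fun k => mul_nonneg (mul_nonneg (by positivity) (hb k)) (by positivity))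
        key (hs1.mul_left s)
    calc ∑' k : ℕ, (k.factorial : ℝ) ^ R * b k * c ^ k
        ≤ ∑' k : ℕ, s * (((k + 1).factorial : ℝ) ^ R * a (k + 1) * (c + 1) ^ (k + 1)) :=
          Summable.tsum_le_tsum key hL (hs1.mul_left s)
      _ = s * ∑' k : ℕ, ((k + 1).factorial : ℝ) ^ R * a (k + 1) * (c + 1) ^ (k + 1) :=
          tsum_mul_left
      _ ≤ s * ∑' k : ℕ, (k.factorial : ℝ) ^ R * a k * (c + 1) ^ k := by
          apply mul_le_mul_of_nonneg_left _ hs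
          exact tsum_shift_le (fun k => (k.factorial : ℝ) ^ R * a k * (c + 1) ^ k)
            (fun k => mul_nonneg (mul_nonneg (by positivity) (ha k)) (by positivity)) hsum2
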